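/- Under the zero-correlation condition k_x/k_p = m²ω²√(η_p/η_x), the matrix Σ = (ℏ/(2(η_xη_p)^{1/4}))·diag(1/(mω), mω) solves the algebraic Riccati equation ΣA + AᵀΣ − ΣBBᵀΣ + Q = 0 with A = [[0,−mω²],[1/m,0]], B = diag(√(η_x k_x), √(η_p k_p)), Q = (ℏ²/4)diag(k_p, k_x). -/

import Mathlib

open Matrix

set_option maxHeartbeats 1000000

theorem stmt_17 (m ω ℏ kx kp ηx ηp : ℝ)
    (hm : 0 < m) (hω : 0 < ω) (hℏ : 0 < ℏ) (hkx : 0 < kx) (hkp : 0 < kp)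
    (hηx : 0 < ηx) (hηx1 : ηx ≤ 1) (hηp : 0 < ηp) (hηp1 : ηp ≤ 1)
    (hZC : kx = m ^ 2 * ω ^ 2 * Real.sqrt (ηp / ηx) * kp) :
    let Sig : Matrix (Fin 2) (Fin 2) ℝ :=
      (ℏ / (2 * (ηx * ηp) ^ ((1 : ℝ) / 4))) • !![1 / (m * ω), 0; 0, m * ω]
    let A : Matrix (Fin 2) (Fin 2) ℝ := !![0, -m * ω ^ 2; 1 / m, 0]
    let B : Matrix (Fin 2) (Fin 2) ℝ := !![Real.sqrt (ηx * kx), 0; 0, Real.sqrt (ηp * kp)]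
    Sig * A + Aᵀ * Sig - Sig * B * Bᵀ * Sig + (ℏ ^ 2 / 4) • !![kp, 0; 0, kx] = 0 := by
  intro Sig A B
  have ha0 : 0 < Real.sqrt ηx := Real.sqrt_pos.mpr hηx
  have hb0 : 0 < Real.sqrt ηp := Real.sqrt_pos.mpr hηp
  have ha2 : Real.sqrt ηx ^ 2 = ηx := Real.sq_sqrt hηx.le
  have hb2 : Real.sqrt ηp ^ 2 = ηp := Real.sq_sqrt hηp.le
  have hkx2 : Real.sqrt kx ^ 2 = kx := Real.sq_sqrt hkx.le
  have hkp2 : Real.sqrt kp ^ 2 = kp := Real.sq_sqrt hkp.le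
  have hdiv : Real.sqrt (ηp / ηx) = Real.sqrt ηp / Real.sqrt ηx := by
    rw [Real.sqrt_div' ηp hηx.le]
  have hs0 : (0:ℝ) < (ηx * ηp) ^ ((1 : ℝ) / 4) :=
    Real.rpow_pos_of_pos (mul_pos hηx hηp) _
  have hs2 : ((ηx * ηp) ^ ((1 : ℝ) / 4)) ^ 2 = Real.sqrt ηx * Real.sqrt ηp := by
    rw [← Real.rpow_natCast ((ηx * ηp) ^ ((1:ℝ)/4)) 2,
      ← Real.rpow_mul (mul_pos hηx hηp).le]
    norm_num
    rw [← Real.sqrt_eq_rpow, Real.sqrt_mul hηx.le]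
  have hZC1 : kx * ηx = m ^ 2 * ω ^ 2 * Real.sqrt ηp * Real.sqrt ηx * kp := by
    rw [hZC, hdiv]; field_simp
    linear_combination (-1 : ℝ) * ha2
  have hZC2 : kx * (Real.sqrt ηx * Real.sqrt ηp) = m ^ 2 * ω ^ 2 * ηp * kp := by
    rw [hZC, hdiv]; field_simp
    linear_combination hb2
  have hm' := hm.ne'
  have hω' := hω.ne'
  have hS' := hs0.ne'
  simp only [Sig, A, B]
  ext i j
  fin_cases i <;> fin_cases j <;>
    simp [Matrix.mul_apply, Fin.sum_univ_two, Matrix.vecHead, Matrix.vecTail, Matrix.vecMul, dotProduct,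
      Real.sqrt_mul hηx.le, Real.sqrt_mul hηp.le]
  · field_simp
    linear_combination (-4 * ℏ ^ 2 * Real.sqrt kx ^ 2) * ha2 + (-4 * ℏ ^ 2 * ηx) * hkx2 +
      (-4 * ℏ ^ 2) * hZC1 + (4 * ℏ ^ 2 * kp * ω ^ 2 * m ^ 2) * hs2
  · field_simp
    ring
  · field_simp
    ring
  · field_simp
    linear_combination (-4 * ℏ ^ 2 * m ^ 2 * ω ^ 2 * Real.sqrt kp ^ 2) * hb2 +
      (-4 * ℏ ^ 2 * m ^ 2 * ω ^ 2 * ηp) * hkp2 + (4 * ℏ ^ 2) * hZC2 + (4 * ℏ ^ 2 * kx) * hs2
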